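/- arXiv:1604.02215 — 2 statements merged into one kernel-verified Lean document; each statement's English description precedes it below -/
import Mathlib

section
/- Let ε > 0, let 0 < δ ≤ ε, let d ∈ ℝ, let R ⊆ U_ε(d) with d ∈ R, let m ≥ 1, and let x, y ∈ A_m(ε, d, R). Set a = x − m·d and b = y − m·d, and suppose a < 0 < b and δ ≤ gcd(a, b). Then there exists N ∈ ℕ such that for all n ≥ N: the set A_n(ε, d, R) is κ-dense in U_ε(n·d) for every κ > gcd(a, b), and moreover n·d + k·gcd(a, b) ∈ A_n(ε, d, R) for every integer k such that n·d + k·gcd(a, b) ∈ U_ε(n·d). -/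
/-- `U_ε(x)`: the open `ε`-neighborhood `(x - ε, x + ε)`. -/
def USet (ε x : ℝ) : Set ℝ := Set.Ioo (x - ε) (x + ε)

/-- `A(ε, (dᵢ), (Rᵢ))`: the set of `z ∈ U_ε(d₁ + ⋯ + dₙ)` which can be written as
`z = x₁ + ⋯ + xₙ` with `xᵢ ∈ Rᵢ` and `|Σ_{i ≤ r} (dᵢ - xᵢ)| < ε` for all `r ≤ n`. -/
def ASeq (ε : ℝ) (n : ℕ) (d : ℕ → ℝ) (R : ℕ → Set ℝ) : Set ℝ :=
  { z | z ∈ USet ε (∑ i ∈ Finset.range n, d i) ∧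
    ∃ x : ℕ → ℝ, (∀ i < n, x i ∈ R i) ∧ z = ∑ i ∈ Finset.range n, x i ∧
      ∀ r ≤ n, |∑ i ∈ Finset.range r, (d i - x i)| < ε }

/-- `A_n(ε, d, R)`: the set `A(ε, (dᵢ), (Rᵢ))` for constant sequences `dᵢ = d`, `Rᵢ = R`. -/
def ASet (ε d : ℝ) (R : Set ℝ) (n : ℕ) : Set ℝ := ASeq ε n (fun _ => d) (fun _ => R)

/-- `A` is `ε`-dense in `I`: every open subinterval of `I` of length `ε` meets `A`. -/
def EpsDenseIn (A : Set ℝ) (ε : ℝ) (I : Set ℝ) : Prop :=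
  ∀ x : ℝ, Set.Ioo x (x + ε) ⊆ I → (Set.Ioo x (x + ε) ∩ A).Nonempty

/-- `g = gcd(a, b)` for reals: either `g > 0` is the greatest common divisor of `a` and `b`
(the largest `c > 0` such that `a` and `b` are integer multiples of `c`), or `g = 0` and no
positive common divisor exists. -/
def IsRealGcd (a b g : ℝ) : Prop :=
  (0 < g ∧ (∃ k : ℤ, a = k * g) ∧ (∃ k : ℤ, b = k * g) ∧
    ∀ c : ℝ, 0 < c → (∃ k : ℤ, a = k * c) → (∃ k : ℤ, b = k * c) → c ≤ g) ∨
  (g = 0 ∧ ∀ c : ℝ, 0 < c → (∃ k : ℤ, a = k * c) → (∃ k : ℤ, b = k * c) → False)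


lemma sum_range_getD (l : List ℝ) (r : ℕ) (hr : r ≤ l.length) :
    ∑ i ∈ Finset.range r, l.getD i 0 = (l.take r).sum := by
  induction r with
  | zero => simp
  | succ r ih =>
    have hr' : r < l.length := hr
    rw [Finset.sum_range_succ, ih (le_of_lt hr'), List.sum_take_succ _ _ hr']
    simp [List.getD_eq_getElem?_getD, List.getElem?_eq_getElem hr']

lemma sum_map_dev (d : ℝ) (l : List ℝ) :
    (l.map (fun v => d - v)).sum = l.length * d - l.sum := by
  induction l with
  | nil => simp
  | cons a l ih => simp [ih]; ring

lemma sum_list_range (f : ℕ → ℝ) (m : ℕ) :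
    ((List.range m).map f).sum = ∑ i ∈ Finset.range m, f i := by
  induction m with
  | zero => simp
  | succ m ih => rw [List.range_succ, Finset.sum_range_succ, List.map_append]; simp [ih]

lemma flatten_replicate_sum (t : ℕ) (l : List ℝ) :
    ((List.replicate t l).flatten).sum = t * l.sum := by
  induction t with
  | zero => simp
  | succ t ih => rw [List.replicate_succ]; simp [ih]; ring

lemma flatten_replicate_length (t : ℕ) (l : List ℝ) :
    ((List.replicate t l).flatten).length = t * l.length := by
  induction t with
  | zero => simp
  | succ t ih => rw [List.replicate_succ]; simp [ih]; ring

lemma mem_flatten_replicate {t : ℕ} {l : List ℝ} {v : ℝ}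
    (h : v ∈ (List.replicate t l).flatten) : v ∈ l := by
  induction t with
  | zero => simp at h
  | succ t ih =>
    rw [List.replicate_succ] at h
    simp only [List.flatten_cons, List.mem_append] at h
    rcases h with h | h
    · exact h
    · exact ih h


lemma list_sum_nonpos {l : List ℝ} (h : ∀ v ∈ l, v ≤ 0) : l.sum ≤ 0 := by
  induction l with
  | nil => simp
  | cons a l ih =>
    simp only [List.sum_cons]
    have := h a (by simp)
    have := ih (fun v hv => h v (by simp [hv]))
    linarith

lemma list_sum_nonneg' {l : List ℝ} (h : ∀ v ∈ l, 0 ≤ v) : 0 ≤ l.sum := by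
  induction l with
  | nil => simp
  | cons a l ih =>
    simp only [List.sum_cons]
    have := h a (by simp)
    have := ih (fun v hv => h v (by simp [hv]))
    linarith

lemma greedy (ε : ℝ) : ∀ (n : ℕ) (l : List ℝ), l.length = n → (∀ v ∈ l, |v| < ε) →
    ∀ S : ℝ, |S| < ε → |S + l.sum| < ε →
    ∃ l' : List ℝ, l.Perm l' ∧ ∀ r, |S + (l'.take r).sum| < ε := by
  intro n
  induction n with
  | zero =>
    intro l hl _ S hS _
    have : l = [] := List.length_eq_zero_iff.mp hl
    exact ⟨[], by simp [this], by simp [hS]⟩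
  | succ n ih =>
    intro l hlen hmem S hS htot
    have hne : l ≠ [] := by intro h; simp [h] at hlen
    obtain ⟨v, hv, hSv⟩ : ∃ v ∈ l, |S + v| < ε := by
      rcases le_or_gt S 0 with hS0 | hS0
      · by_cases hpos : ∃ v ∈ l, 0 < v
        · obtain ⟨v, hv, hv0⟩ := hpos
          refine ⟨v, hv, ?_⟩
          have := hmem v hv
          rw [abs_lt] at *
          constructor <;> [skip; skip] <;> linarith
        · push_neg at hpos
          refine ⟨l.head hne, List.head_mem hne, ?_⟩
          set v := l.head hne with hvdef
          have hvmem : v ∈ l := List.head_mem hne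
          have hperm : l.Perm (v :: l.erase v) := List.perm_cons_erase hvmem
          have hsum : l.sum = v + (l.erase v).sum := by
            have := hperm.sum_eq; simpa using this
          have herase : (l.erase v).sum ≤ 0 :=
            list_sum_nonpos (fun w hw => hpos w (List.mem_of_mem_erase hw))
          have hv0 : v ≤ 0 := hpos v hvmem
          rw [abs_lt] at *
          constructor <;> linarith
      · by_cases hneg : ∃ v ∈ l, v ≤ 0
        · obtain ⟨v, hv, hv0⟩ := hneg
          refine ⟨v, hv, ?_⟩
          have := hmem v hv
          rw [abs_lt] at *
          constructor <;> linarith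
        · push_neg at hneg
          refine ⟨l.head hne, List.head_mem hne, ?_⟩
          set v := l.head hne with hvdef
          have hvmem : v ∈ l := List.head_mem hne
          have hperm : l.Perm (v :: l.erase v) := List.perm_cons_erase hvmem
          have hsum : l.sum = v + (l.erase v).sum := by
            have := hperm.sum_eq; simpa using this
          have herase : 0 ≤ (l.erase v).sum :=
            list_sum_nonneg' (fun w hw => le_of_lt (hneg w (List.mem_of_mem_erase hw)))
          have hv0 : 0 < v := hneg v hvmem
          rw [abs_lt] at *
          constructor <;> linarith
    have hperm : l.Perm (v :: l.erase v) := List.perm_cons_erase hv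
    have hsum : l.sum = v + (l.erase v).sum := by
      have := hperm.sum_eq; simpa using this
    have hlen' : (l.erase v).length = n := by
      have := List.length_erase_of_mem hv
      omega
    have hmem' : ∀ w ∈ l.erase v, |w| < ε :=
      fun w hw => hmem w (List.mem_of_mem_erase hw)
    have htot' : |(S + v) + (l.erase v).sum| < ε := by
      have : (S + v) + (l.erase v).sum = S + l.sum := by rw [hsum]; ring
      rw [this]; exact htot
    obtain ⟨l'', hp'', hr''⟩ := ih (l.erase v) hlen' hmem' (S + v) hSv htot'
    refine ⟨v :: l'', hperm.trans (hp''.cons v), ?_⟩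
    intro r
    cases r with
    | zero => simpa using hS
    | succ r =>
      rw [List.take_succ_cons, List.sum_cons, ← add_assoc]
      exact hr'' r

lemma mem_ASet_of_list (ε d : ℝ) (R : Set ℝ) (hR : R ⊆ USet ε d) (l : List ℝ)
    (hl : ∀ v ∈ l, v ∈ R) (hz : |(l.length : ℝ) * d - l.sum| < ε) :
    l.sum ∈ ASet ε d R l.length := by
  have hε : 0 < ε := lt_of_le_of_lt (abs_nonneg _) hz
  set n := l.length with hn
  set dl := l.map (fun v => d - v) with hdl
  have hdlsum : dl.sum = n * d - l.sum := sum_map_dev d l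
  have hdllen : dl.length = n := by simp [hdl, hn]
  have hdlmem : ∀ v ∈ dl, |v| < ε := by
    intro v hv
    rw [hdl, List.mem_map] at hv
    obtain ⟨w, hw, rfl⟩ := hv
    have := hR (hl w hw)
    simp only [USet, Set.mem_Ioo] at this
    rw [abs_lt]; constructor <;> linarith [this.1, this.2]
  obtain ⟨l', hperm, hpre⟩ := greedy ε n dl hdllen hdlmem 0 (by simpa using hε)
    (by rw [hdlsum]; simpa using hz)
  have hlen' : l'.length = n := by rw [← hperm.length_eq, hdllen]
  have hsum' : l'.sum = n * d - l.sum := by rw [← hperm.sum_eq, hdlsum]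
  refine ⟨?_, fun i => d - l'.getD i 0, ?_, ?_, ?_⟩
  · simp only [USet, Finset.sum_const, Finset.card_range, nsmul_eq_mul, Set.mem_Ioo]
    rw [abs_lt] at hz
    constructor <;> linarith [hz.1, hz.2]
  · intro i hi
    have hil : i < l'.length := by omega
    have h1 : l'.getD i 0 = l'[i] := List.getD_eq_getElem l' 0 hil
    have h2 : l'[i] ∈ l' := List.getElem_mem hil
    have h3 : l'[i] ∈ dl := (hperm.symm.subset) h2
    rw [hdl, List.mem_map] at h3
    obtain ⟨w, hw, hwe⟩ := h3
    have heq : d - l'.getD i 0 = w := by rw [h1, ← hwe]; ring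
    show d - l'.getD i 0 ∈ R
    rw [heq]; exact hl w hw
  · have : ∑ i ∈ Finset.range n, (d - l'.getD i 0)
        = n * d - ∑ i ∈ Finset.range n, l'.getD i 0 := by
      rw [Finset.sum_sub_distrib, Finset.sum_const, Finset.card_range, nsmul_eq_mul]
    rw [this, sum_range_getD l' n (by omega), ← hlen', List.take_length, hsum']
    rw [hlen']; ring
  · intro r hr
    have : ∀ i, (fun _ => d) i - (d - l'.getD i 0) = l'.getD i 0 := fun i => by ring
    simp only [this]
    rw [sum_range_getD l' r (by omega)]
    simpa using hpre r

/-- Let `d ∈ R ⊆ U_ε(d)`, `m ≥ 1`, `x, y ∈ A_m(ε, d, R)`, `a = x − m·d`,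
`b = y − m·d` with `a < 0 < b`, and suppose `δ ≤ gcd(a, b)` where `0 < δ ≤ ε`.  Then there is
`N` such that for all `n ≥ N` the set `A_n(ε, d, R)` is `κ`-dense in `U_ε(n·d)` for every
`κ > gcd(a, b)`, and `n·d + k·gcd(a, b) ∈ A_n(ε, d, R)` for every integer `k` with
`n·d + k·gcd(a, b) ∈ U_ε(n·d)`. -/
theorem ASet_generating_large_gcd (ε δ d : ℝ) (hε : 0 < ε) (hδ : 0 < δ) (hδε : δ ≤ ε)
    (R : Set ℝ) (hR : R ⊆ USet ε d) (hd : d ∈ R) (m : ℕ) (hm : 1 ≤ m)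
    (x y : ℝ) (hx : x ∈ ASet ε d R m) (hy : y ∈ ASet ε d R m)
    (ha : x - (m : ℝ) * d < 0) (hb : 0 < y - (m : ℝ) * d)
    (g : ℝ) (hg : IsRealGcd (x - (m : ℝ) * d) (y - (m : ℝ) * d) g) (hgδ : δ ≤ g) :
    ∃ N : ℕ, ∀ n : ℕ, N ≤ n →
      (∀ κ : ℝ, g < κ → EpsDenseIn (ASet ε d R n) κ (USet ε ((n : ℝ) * d))) ∧
      (∀ k : ℤ, (n : ℝ) * d + k * g ∈ USet ε ((n : ℝ) * d) →
        (n : ℝ) * d + k * g ∈ ASet ε d R n) := by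
  rcases hg with ⟨hgpos, ⟨p, hp⟩, ⟨q, hq⟩, hmax⟩ | ⟨hg0, _⟩
  swap
  · exfalso; linarith
  have hp0 : p < 0 := by
    by_contra h
    push_neg at h
    have h2 : (0:ℝ) ≤ (p:ℝ) * g := mul_nonneg (by exact_mod_cast h) hgpos.le
    rw [← hp] at h2; linarith
  have hq0 : 0 < q := by
    by_contra h
    push_neg at h
    have h2 : (q:ℝ) * g ≤ 0 :=
      mul_nonpos_of_nonpos_of_nonneg (by exact_mod_cast h) hgpos.le
    rw [← hq] at h2; linarith
  have hcop : IsCoprime p q := by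
    rw [Int.isCoprime_iff_gcd_eq_one]
    by_contra hne
    set c : ℕ := Int.gcd p q with hc
    have hc0 : c ≠ 0 := by
      have hpne : p ≠ 0 := by omega
      simp [hc, Int.gcd_eq_zero_iff, hpne]
    have hc1 : 1 < c := by omega
    obtain ⟨p', hp'⟩ : ((c:ℤ)) ∣ p := Int.gcd_dvd_left p q
    obtain ⟨q', hq'⟩ : ((c:ℤ)) ∣ q := Int.gcd_dvd_right p q
    have hcr : (1:ℝ) < (c : ℝ) := by exact_mod_cast hc1
    have hle := hmax ((c : ℝ) * g) (by positivity)
      ⟨p', by rw [hp, hp']; push_cast; ring⟩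
      ⟨q', by rw [hq, hq']; push_cast; ring⟩
    nlinarith
  obtain ⟨u, v, huv⟩ := hcop
  have key : ∀ k : ℤ, ∃ st : ℕ × ℕ, ((st.2 : ℤ)) * p + ((st.1 : ℤ)) * q = k := by
    intro k
    have h1 : (k * u) * p + (k * v) * q = k := by linear_combination k * huv
    set j : ℤ := (k*u).natAbs + (k*v).natAbs with hj
    have hj0 : 0 ≤ j := by positivity
    have hju : -(k*u) ≤ j := by
      have h := Int.le_natAbs (a := -(k*u)); rw [Int.natAbs_neg] at h; omega
    have hjv : -(k*v) ≤ j := by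
      have h := Int.le_natAbs (a := -(k*v)); rw [Int.natAbs_neg] at h; omega
    have ht0 : 0 ≤ k*u + j * q := by nlinarith
    have hs0 : 0 ≤ k*v - j * p := by nlinarith
    refine ⟨((k*v - j*p).toNat, (k*u + j*q).toNat), ?_⟩
    rw [Int.toNat_of_nonneg ht0, Int.toNat_of_nonneg hs0]
    linear_combination h1
  choose F hF using key
  set K : ℤ := ⌈ε / g⌉ with hK
  refine ⟨m * ((Finset.Icc (-K) K).sup fun k => (F k).1 + (F k).2), ?_⟩
  intro n hn
  have hmem2 : ∀ k : ℤ, (n : ℝ) * d + k * g ∈ USet ε ((n : ℝ) * d) →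
      (n : ℝ) * d + k * g ∈ ASet ε d R n := by
    intro k hkU
    simp only [USet, Set.mem_Ioo] at hkU
    have hkg : |(k:ℝ) * g| < ε := by
      rw [abs_lt]; constructor <;> linarith [hkU.1, hkU.2]
    have habs : |k| ≤ K := by
      have hkg' : |(k:ℝ)| * g < ε := by
        have e : |(k:ℝ)| * g = |(k:ℝ) * g| := by rw [abs_mul, abs_of_pos hgpos]
        rw [e]; exact hkg
      have h2 : |(k:ℝ)| < ε / g := (lt_div_iff₀ hgpos).mpr hkg'
      have h3 : ((|k|:ℤ):ℝ) < (K:ℝ) := by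
        rw [Int.cast_abs]
        exact lt_of_lt_of_le h2 (by rw [hK]; exact Int.le_ceil _)
      exact_mod_cast h3.le
    have hkK : k ∈ Finset.Icc (-K) K := by rw [Finset.mem_Icc]; exact abs_le.mp habs
    set s := (F k).1 with hs
    set t := (F k).2 with ht
    have hstm : m * (s + t) ≤ n :=
      le_trans (Nat.mul_le_mul_left m (Finset.le_sup (f := fun k => (F k).1 + (F k).2) hkK)) hn
    obtain ⟨hxU, xf, hxfR, hxsum, -⟩ := hx
    obtain ⟨hyU, yf, hyfR, hysum, -⟩ := hy
    set xl := (List.range m).map xf with hxl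
    set yl := (List.range m).map yf with hyl
    have hxlsum : xl.sum = x := by rw [hxl, sum_list_range, ← hxsum]
    have hylsum : yl.sum = y := by rw [hyl, sum_list_range, ← hysum]
    have hxllen : xl.length = m := by simp [hxl]
    have hyllen : yl.length = m := by simp [hyl]
    have hxlR : ∀ v ∈ xl, v ∈ R := by
      intro v hv
      rw [hxl, List.mem_map] at hv
      obtain ⟨i, hi, rfl⟩ := hv
      exact hxfR i (List.mem_range.mp hi)
    have hylR : ∀ v ∈ yl, v ∈ R := by
      intro v hv
      rw [hyl, List.mem_map] at hv
      obtain ⟨i, hi, rfl⟩ := hv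
      exact hyfR i (List.mem_range.mp hi)
    set L : List ℝ := (List.replicate t xl).flatten ++ ((List.replicate s yl).flatten
      ++ List.replicate (n - m*(s+t)) d) with hL
    have hLlen : L.length = n := by
      rw [hL]
      simp only [List.length_append, flatten_replicate_length, List.length_replicate,
        hxllen, hyllen]
      have e : m*(s+t) = t*m + s*m := by ring
      omega
    have hLR : ∀ v ∈ L, v ∈ R := by
      intro v hv
      rw [hL] at hv
      simp only [List.mem_append] at hv
      rcases hv with hv | hv | hv
      · exact hxlR v (mem_flatten_replicate hv)
      · exact hylR v (mem_flatten_replicate hv)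
      · rw [List.eq_of_mem_replicate hv]; exact hd
    have hcast : ((n - m*(s+t) : ℕ) : ℝ) = (n:ℝ) - (m:ℝ)*((s:ℝ)+(t:ℝ)) := by
      rw [Nat.cast_sub hstm]; push_cast; ring
    have hk' : (t:ℝ)*(p:ℝ) + (s:ℝ)*(q:ℝ) = (k:ℝ) := by exact_mod_cast hF k
    have hLsum : L.sum = (n:ℝ)*d + (k:ℝ)*g := by
      rw [hL]
      simp only [List.sum_append, flatten_replicate_sum, List.sum_replicate,
        nsmul_eq_mul, hxlsum, hylsum]
      rw [hcast]
      linear_combination (t:ℝ)*hp + (s:ℝ)*hq + g*hk'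
    have hdev : |(L.length : ℝ) * d - L.sum| < ε := by
      rw [hLlen, hLsum]
      have e : (n:ℝ)*d - ((n:ℝ)*d + (k:ℝ)*g) = -((k:ℝ)*g) := by ring
      rw [e, abs_neg]; exact hkg
    have hfin := mem_ASet_of_list ε d R hR L hLR hdev
    rw [hLlen, hLsum] at hfin
    exact hfin
  refine ⟨?_, hmem2⟩
  intro κ hκ u hsub
  set w := (u - n*d)/g with hw
  set k : ℤ := ⌊w⌋ + 1 with hk
  have hwk : w < (k:ℝ) := by
    rw [hk]; push_cast; exact Int.lt_floor_add_one w
  have hkw : (k:ℝ) ≤ w + 1 := by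
    rw [hk]; push_cast
    have := Int.floor_le w; linarith
  have hwg : w * g = u - n*d := div_mul_cancel₀ _ (ne_of_gt hgpos)
  have hz1 : u < n*d + k*g := by nlinarith
  have hz2 : n*d + k*g < u + κ := by nlinarith
  have hzI : (n:ℝ)*d + k*g ∈ Set.Ioo u (u + κ) := ⟨hz1, hz2⟩
  exact ⟨_, hzI, hmem2 k (hsub hzI)⟩
end

section
/- Fix υ > 0 and a strictly monotone sequence (t_m)_{m∈ℕ} of reals converging to 0 with υ + t_0 > 0. For any 0 < ε ≤ 1, any 0 < δ ≤ ε, any D > 0, and any r ∈ ℕ, there exist N ∈ ℕ and M ∈ ℕ such that for any n ≥ N, any reals d_1, …, d_n and any sets R_i ⊆ U_ε(d_i) (1 ≤ i ≤ n) satisfying (a) 2ε < d_i ≤ D for all i, and (b) each R_i is r_i-tamely (ε/12)-dense in U_ε(d_i) for some r_i ≤ r, the set A(ε, (d_i)_{i=1}^n, (R_i)_{i=1}^n) contains a subset that is M-tamely δ-dense in U_{ε/2}(Σ_{i=1}^n d_i). -/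
/-- The additive semigroup generated by a set of reals: all finite sums of its elements. -/
def semigroupGen (S : Set ℝ) : Set ℝ :=
  { x | ∃ l : List ℝ, l ≠ [] ∧ (∀ s ∈ l, s ∈ S) ∧ l.sum = x }

/-- `𝒯_m`: the additive semigroup generated by `{υ + t₀, …, υ + t_m}`. -/
def TGen (υ : ℝ) (t : ℕ → ℝ) (m : ℕ) : Set ℝ :=
  semigroupGen {x : ℝ | ∃ i ≤ m, x = υ + t i}

/-- `𝒯_m^* = υ + 𝒯_m`. -/
def TGenStar (υ : ℝ) (t : ℕ → ℝ) (m : ℕ) : Set ℝ :=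
  (fun x => υ + x) '' TGen υ t m

/-- `R ⊆ U_ε(d)` is `r`-tamely `δ`-dense in `U_ε(d)`: there is a finite
`L ⊆ U_ε(d) ∩ 𝒯_r^*` which is `δ`-dense in `U_ε(d)` and such that
`R = (L + {t_m : m ≥ r}) ∩ U_ε(d)`. -/
def RTamelyDense (υ : ℝ) (t : ℕ → ℝ) (r : ℕ) (δ ε d : ℝ) (R : Set ℝ) : Prop :=
  ∃ L : Set ℝ, L.Finite ∧ L ⊆ USet ε d ∩ TGenStar υ t r ∧
    EpsDenseIn L δ (USet ε d) ∧
    R = {z : ℝ | ∃ l ∈ L, ∃ m ≥ r, z = l + t m} ∩ USet ε d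

/-- `R` is tamely `δ`-dense in `U_ε(d)` if it is `r`-tamely `δ`-dense for some `r`. -/
def TamelyDense (υ : ℝ) (t : ℕ → ℝ) (δ ε d : ℝ) (R : Set ℝ) : Prop :=
  ∃ r : ℕ, RTamelyDense υ t r δ ε d R

lemma mem_semigroupGen_of_mem {S : Set ℝ} {x : ℝ} (hx : x ∈ S) : x ∈ semigroupGen S :=
  ⟨[x], by simp, by simpa using hx, by simp⟩

lemma add_mem_semigroupGen {S : Set ℝ} {x y : ℝ} (hx : x ∈ semigroupGen S)
    (hy : y ∈ semigroupGen S) : x + y ∈ semigroupGen S := by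
  obtain ⟨l1, h1, h1S, h1s⟩ := hx
  obtain ⟨l2, h2, h2S, h2s⟩ := hy
  refine ⟨l1 ++ l2, by simp [h1], ?_, by rw [List.sum_append, h1s, h2s]⟩
  intro s hs
  rcases List.mem_append.mp hs with h | h
  · exact h1S s h
  · exact h2S s h

lemma sum_mem_semigroupGen {S : Set ℝ} (f : ℕ → ℝ) :
    ∀ b : ℕ, 0 < b → (∀ i < b, f i ∈ semigroupGen S) →
      (∑ i ∈ Finset.range b, f i) ∈ semigroupGen S := by
  intro b
  induction b with
  | zero => intro h; exact absurd h (lt_irrefl 0)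
  | succ b ih =>
    intro _ hf
    rcases Nat.eq_zero_or_pos b with hb | hb
    · subst hb; simpa using hf 0 (by omega)
    · rw [Finset.sum_range_succ]
      exact add_mem_semigroupGen (ih hb fun i hi => hf i (by omega)) (hf b (by omega))

lemma TGen_mono (υ : ℝ) (t : ℕ → ℝ) {m m' : ℕ} (h : m ≤ m') : TGen υ t m ⊆ TGen υ t m' := by
  rintro x ⟨l, hne, hS, hsum⟩
  refine ⟨l, hne, ?_, hsum⟩
  intro s hs
  obtain ⟨i, hi, he⟩ := hS s hs
  exact ⟨i, hi.trans h, he⟩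

lemma TGenStar_mono (υ : ℝ) (t : ℕ → ℝ) {m m' : ℕ} (h : m ≤ m') :
    TGenStar υ t m ⊆ TGenStar υ t m' :=
  Set.image_mono (TGen_mono υ t h)

set_option maxHeartbeats 1000000 in
/-- Fix `υ > 0` and a strictly monotone sequence `t_m → 0` with `υ + t₀ > 0`.
For any `0 < ε ≤ 1`, `0 < δ ≤ ε`, `D > 0` and `r ∈ ℕ` there are `N, M ∈ ℕ` such that for any
`n ≥ N`, any reals `d₁, …, dₙ` with `2ε < dᵢ ≤ D`, and any `Rᵢ ⊆ U_ε(dᵢ)` which are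
`rᵢ`-tamely `ε/12`-dense in `U_ε(dᵢ)` for some `rᵢ ≤ r`, the set `A(ε, (dᵢ), (Rᵢ))` contains
a subset which is `M`-tamely `δ`-dense in `U_{ε/2}(Σ dᵢ)`. -/
theorem delta_density_general (υ : ℝ) (hυ : 0 < υ) (t : ℕ → ℝ)
    (hmono : StrictMono t ∨ StrictAnti t)
    (hlim : Filter.Tendsto t Filter.atTop (nhds 0)) (ht0 : 0 < υ + t 0)
    (ε δ D : ℝ) (hε : 0 < ε) (hε1 : ε ≤ 1) (hδ : 0 < δ) (hδε : δ ≤ ε)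
    (hD : 0 < D) (r : ℕ) :
    ∃ N M : ℕ, ∀ n : ℕ, N ≤ n → ∀ (d : ℕ → ℝ) (R : ℕ → Set ℝ),
      (∀ i < n, 2 * ε < d i ∧ d i ≤ D) →
      (∀ i < n, R i ⊆ USet ε (d i)) →
      (∀ i < n, ∃ ri ≤ r, RTamelyDense υ t ri (ε / 12) ε (d i) (R i)) →
      ∃ R' : Set ℝ, R' ⊆ ASeq ε n d R ∧
        RTamelyDense υ t M δ (ε / 2) (∑ i ∈ Finset.range n, d i) R' := by
  -- small quantity η
  set η : ℝ := min δ ε / 100 with hηdef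
  have hη : 0 < η := by
    have h1 := lt_min hδ hε
    simp only [hηdef]; linarith
  have hηδ : η ≤ δ / 100 := by
    have := min_le_left δ ε; simp only [hηdef]; linarith
  have hηε : η ≤ ε / 100 := by
    have := min_le_right δ ε; simp only [hηdef]; linarith
  -- index m₀ past which |t m| < η
  obtain ⟨m₀, hm₀⟩ : ∃ m₀ : ℕ, ∀ m ≥ m₀, |t m| < η := by
    have := Metric.tendsto_atTop.mp hlim η hη
    obtain ⟨m₀, hm⟩ := this
    exact ⟨m₀, fun m hm' => by simpa [Real.dist_eq] using hm m hm'⟩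
  set m₁ : ℕ := max m₀ r with hm₁def
  have hm₁r : r ≤ m₁ := le_max_right _ _
  have hm₁0 : m₀ ≤ m₁ := le_max_left _ _
  -- two consecutive indices with t p < t q
  obtain ⟨p, q, hp1, hp2, hq1, hq2, hpq⟩ :
      ∃ p q : ℕ, m₁ ≤ p ∧ p ≤ m₁ + 1 ∧ m₁ ≤ q ∧ q ≤ m₁ + 1 ∧ t p < t q := by
    rcases hmono with h | h
    · exact ⟨m₁, m₁ + 1, le_rfl, by omega, by omega, le_rfl, h (by omega)⟩
    · exact ⟨m₁ + 1, m₁, by omega, le_rfl, le_rfl, by omega, h (by omega)⟩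
  set s : ℝ := t q - t p with hsdef
  have hs : 0 < s := by simp only [hsdef]; linarith
  have htp : |t p| < η := hm₀ p (by omega)
  have htq : |t q| < η := hm₀ q (by omega)
  rw [abs_lt] at htp htq
  have hs2η : s < 2 * η := by simp only [hsdef]; linarith [htp.1, htq.2]
  have hsδ : s < δ / 50 := by linarith
  have hsε : s < ε / 50 := by linarith
  -- number of swaps K
  set K : ℕ := ⌊ε / (12 * s)⌋₊ + 1 with hKdef
  have hK1 : ε / 12 < K * s := by
    have h1 : ε / (12 * s) < (K : ℝ) := by
      have := Nat.lt_floor_add_one (ε / (12 * s))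
      push_cast [hKdef]; linarith
    have h2 : ε / (12 * s) * s = ε / 12 := by field_simp
    calc ε / 12 = ε / (12 * s) * s := h2.symm
      _ < K * s := by exact mul_lt_mul_of_pos_right h1 hs
  have hK2 : (K : ℝ) * s ≤ ε / 12 + s := by
    have h0 : (0:ℝ) ≤ ε / (12 * s) := by positivity
    have h1 : (⌊ε / (12 * s)⌋₊ : ℝ) ≤ ε / (12 * s) := Nat.floor_le h0
    have h2 : ε / (12 * s) * s = ε / 12 := by field_simp
    have h3 : (K : ℝ) = (⌊ε / (12 * s)⌋₊ : ℝ) + 1 := by push_cast [hKdef]; ring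
    nlinarith
  clear_value η s K
  refine ⟨K + 2, m₁ + 1, ?_⟩
  intro n hn d R hd hR htame
  set T : ℝ := ∑ i ∈ Finset.range n, d i with hTdef
  set b : ℕ := n - 1 with hbdef
  have hbn : b < n := by omega
  have hnb : n = b + 1 := by omega
  have hKb : K + 1 ≤ b := by omega
  -- extract tame data, uniformized
  have hdata : ∀ i, ∃ Li : Set ℝ, i < n →
      Li.Finite ∧ Li ⊆ USet ε (d i) ∩ TGenStar υ t (m₁ + 1) ∧
      EpsDenseIn Li (ε / 12) (USet ε (d i)) ∧
      ∀ c ∈ Li, ∀ m ≥ m₁, c + t m ∈ USet ε (d i) → c + t m ∈ R i := by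
    intro i
    by_cases h : i < n
    · obtain ⟨ri, hri, L0, hfin, hsub, hdense, heq⟩ := htame i h
      refine ⟨L0, fun _ => ⟨hfin, ?_, hdense, ?_⟩⟩
      · intro x hx
        exact ⟨(hsub hx).1, TGenStar_mono υ t (by omega) (hsub hx).2⟩
      · intro c hc m hm hU
        rw [heq]
        exact ⟨⟨c, hc, m, by omega, rfl⟩, hU⟩
    · exact ⟨∅, fun h' => absurd h' h⟩
  choose L hLprop using hdata
  -- greedy construction of the base points
  have greedy : ∀ j, j ≤ n → ∃ l : ℕ → ℝ, (∀ i < j, l i ∈ L i) ∧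
      ∀ i ≤ j, (∑ k ∈ Finset.range i, (d k - l k - t p)) ∈ Set.Ico (0:ℝ) (ε / 12) := by
    intro j
    induction j with
    | zero =>
      intro _
      refine ⟨fun _ => 0, by omega, ?_⟩
      intro i hi
      have : i = 0 := by omega
      subst this
      simp [Set.mem_Ico]; linarith
    | succ j ih =>
      intro hj
      obtain ⟨l, hl1, hl2⟩ := ih (by omega)
      have hjn : j < n := by omega
      obtain ⟨hfin, hsub, hdense, hmem⟩ := hLprop j hjn
      have hdr := hl2 j le_rfl
      rw [Set.mem_Ico] at hdr
      set dr : ℝ := ∑ k ∈ Finset.range j, (d k - l k - t p) with hdrdef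
      set c : ℝ := d j + dr - t p - ε / 12 with hcdef
      have hsubU : Set.Ioo c (c + ε / 12) ⊆ USet ε (d j) := by
        apply Set.Ioo_subset_Ioo
        · simp only [hcdef]; linarith [htp.1, htp.2, hdr.1, hdr.2]
        · simp only [hcdef]; linarith [htp.1, htp.2, hdr.1, hdr.2]
      obtain ⟨y, hy1, hy2⟩ := hdense c hsubU
      rw [Set.mem_Ioo] at hy1
      refine ⟨Function.update l j y, ?_, ?_⟩
      · intro i hi
        rcases Nat.lt_or_ge i j with h | h
        · rw [Function.update_of_ne (by omega)]; exact hl1 i h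
        · have : i = j := by omega
          subst this
          rw [Function.update_self]; exact hy2
      · intro i hi
        rcases Nat.lt_or_ge i (j + 1) with h | h
        · have heqs : ∑ k ∈ Finset.range i, (d k - Function.update l j y k - t p)
              = ∑ k ∈ Finset.range i, (d k - l k - t p) := by
            apply Finset.sum_congr rfl
            intro k hk
            rw [Finset.mem_range] at hk
            rw [Function.update_of_ne (by omega)]
          rw [heqs]
          exact hl2 i (by omega)
        · have : i = j + 1 := by omega
          subst this
          rw [Finset.sum_range_succ]
          have heqs : ∑ k ∈ Finset.range j, (d k - Function.update l j y k - t p)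
              = ∑ k ∈ Finset.range j, (d k - l k - t p) := by
            apply Finset.sum_congr rfl
            intro k hk
            rw [Finset.mem_range] at hk
            rw [Function.update_of_ne (by omega)]
          rw [heqs, Function.update_self, ← hdrdef]
          rw [Set.mem_Ico]
          constructor
          · simp only [hcdef] at hy1; linarith [hy1.2]
          · simp only [hcdef] at hy1; linarith [hy1.1]
  obtain ⟨l, hlmem, hdrift⟩ := greedy b (by omega)
  -- notation shortcuts
  set Sb : ℝ := ∑ i ∈ Finset.range b, (l i + t p) with hSbdef
  -- relation between sum of d, Sb and drift
  have hdrel : ∀ j : ℕ, (∑ i ∈ Finset.range j, d i)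
      = (∑ i ∈ Finset.range j, (l i + t p)) + ∑ i ∈ Finset.range j, (d i - l i - t p) := by
    intro j
    rw [← Finset.sum_add_distrib]
    apply Finset.sum_congr rfl
    intro i _
    ring
  -- sum with swaps
  have hsum_eq : ∀ k j : ℕ,
      (∑ i ∈ Finset.range j, (l i + t (if b - K ≤ i ∧ i < b - K + k then q else p)))
      = (∑ i ∈ Finset.range j, (l i + t p))
        + (((Finset.range j).filter (fun i => b - K ≤ i ∧ i < b - K + k)).card : ℝ) * s := by
    intro k j
    have hterm : ∀ i, l i + t (if b - K ≤ i ∧ i < b - K + k then q else p)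
        = (l i + t p) + (if b - K ≤ i ∧ i < b - K + k then s else 0) := by
      intro i
      by_cases h : b - K ≤ i ∧ i < b - K + k
      · simp only [if_pos h, hsdef]; ring
      · simp only [if_neg h]; ring
    rw [Finset.sum_congr rfl fun i _ => hterm i, Finset.sum_add_distrib,
      Finset.sum_ite, Finset.sum_const, Finset.sum_const_zero, add_zero, nsmul_eq_mul]
  have hcard_le : ∀ k j : ℕ,
      ((Finset.range j).filter (fun i => b - K ≤ i ∧ i < b - K + k)).card ≤ k := by
    intro k j
    have hsub : ((Finset.range j).filter (fun i => b - K ≤ i ∧ i < b - K + k))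
        ⊆ Finset.Ico (b - K) (b - K + k) := by
      intro x hx
      simp only [Finset.mem_filter, Finset.mem_range, Finset.mem_Ico] at hx ⊢
      omega
    have := Finset.card_le_card hsub
    rw [Nat.card_Ico] at this
    omega
  have hcard_eq : ∀ k : ℕ, k ≤ K →
      ((Finset.range b).filter (fun i => b - K ≤ i ∧ i < b - K + k)).card = k := by
    intro k hk
    have : ((Finset.range b).filter (fun i => b - K ≤ i ∧ i < b - K + k))
        = Finset.Ico (b - K) (b - K + k) := by
      ext x
      simp only [Finset.mem_filter, Finset.mem_range, Finset.mem_Ico]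
      omega
    rw [this, Nat.card_Ico]
    omega
  -- data about the last set L b
  obtain ⟨hfinb, hsubb, hdenseb, hmemb⟩ := hLprop b hbn
  have hdrb := hdrift b le_rfl
  rw [Set.mem_Ico] at hdrb
  -- the candidate L' and R'
  set Lset : Set ℝ := {y : ℝ | (∃ k : ℕ, k ≤ K ∧ ∃ c ∈ L b, y = Sb + k * s + c)
      ∧ y ∈ USet (ε / 2) T} with hLsetdef
  refine ⟨{z : ℝ | ∃ l' ∈ Lset, ∃ m ≥ m₁ + 1, z = l' + t m} ∩ USet (ε / 2) T, ?_,
    Lset, ?_, ?_, ?_, rfl⟩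
  · -- R' ⊆ ASeq ε n d R
    rintro z ⟨⟨l', ⟨⟨k, hk, c, hc, hl'eq⟩, hl'U⟩, m, hm, hzeq⟩, hzU⟩
    simp only [USet, Set.mem_Ioo] at hzU
    have hkKs : (k : ℝ) * s ≤ (K : ℝ) * s :=
      mul_le_mul_of_nonneg_right (by exact_mod_cast hk) hs.le
    have hTsplit : T = (∑ i ∈ Finset.range b, d i) + d b := by
      rw [hTdef, hnb, Finset.sum_range_succ]
    have hTb : (∑ i ∈ Finset.range b, d i)
        = Sb + ∑ i ∈ Finset.range b, (d i - l i - t p) := hdrel b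
    refine ⟨?_, (fun i => if i < b then
        l i + t (if b - K ≤ i ∧ i < b - K + k then q else p) else c + t m), ?_, ?_, ?_⟩
    · simp only [USet, Set.mem_Ioo]
      constructor <;> linarith [hzU.1, hzU.2]
    · intro i hi
      rcases Nat.lt_or_ge i b with h | h
      · -- i < b
        simp only [if_pos h]
        have h1 := hdrift i (by omega)
        have h2 := hdrift (i + 1) (by omega)
        rw [Set.mem_Ico] at h1 h2
        have hstep : (∑ j ∈ Finset.range (i + 1), (d j - l j - t p))
            = (∑ j ∈ Finset.range i, (d j - l j - t p)) + (d i - l i - t p) :=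
          Finset.sum_range_succ _ i
        apply (hLprop i (by omega)).2.2.2 (l i) (hlmem i h)
        · split <;> omega
        · simp only [USet, Set.mem_Ioo]
          by_cases hif : b - K ≤ i ∧ i < b - K + k
          · simp only [if_pos hif]
            have hq : t q = t p + s := by simp only [hsdef]; ring
            rw [hq]
            constructor <;> linarith [h1.1, h1.2, h2.1, h2.2]
          · simp only [if_neg hif]
            constructor <;> linarith [h1.1, h1.2, h2.1, h2.2]
      · -- i = b
        have hib : i = b := by omega
        simp only [hib]
        rw [if_neg (lt_irrefl b)]
        apply hmemb c hc m (by omega)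
        have hceq : c + t m = z - (Sb + (k : ℝ) * s) := by
          rw [hzeq, hl'eq]; ring
        simp only [USet, Set.mem_Ioo]
        rw [hceq]
        have hks0 : (0:ℝ) ≤ (k : ℝ) * s := by positivity
        constructor <;> linarith [hzU.1, hzU.2, hdrb.1, hdrb.2, hks0, hkKs, hK2, hsε]
    · -- z equals the sum
      rw [hnb, Finset.sum_range_succ, if_neg (lt_irrefl b)]
      have hsum_b : (∑ i ∈ Finset.range b, (if i < b then
          l i + t (if b - K ≤ i ∧ i < b - K + k then q else p) else c + t m))
        = ∑ i ∈ Finset.range b, (l i + t (if b - K ≤ i ∧ i < b - K + k then q else p)) := by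
        apply Finset.sum_congr rfl
        intro i hi
        rw [Finset.mem_range] at hi
        rw [if_pos hi]
      rw [hsum_b, hsum_eq k b, hcard_eq k hk, hzeq, hl'eq]
      ring
    · -- drift bounds
      intro r' hr'
      rcases Nat.lt_or_ge r' n with h | h
      · -- r' ≤ b
        have hr'b : r' ≤ b := by omega
        have hsum_r : (∑ i ∈ Finset.range r', (if i < b then
            l i + t (if b - K ≤ i ∧ i < b - K + k then q else p) else c + t m))
          = ∑ i ∈ Finset.range r', (l i + t (if b - K ≤ i ∧ i < b - K + k then q else p)) := by
          apply Finset.sum_congr rfl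
          intro i hi
          rw [Finset.mem_range] at hi
          rw [if_pos (by omega)]
        rw [Finset.sum_sub_distrib, hsum_r, hsum_eq k r', hdrel r']
        have hcr := hcard_le k r'
        have hdr' := hdrift r' hr'b
        rw [Set.mem_Ico] at hdr'
        set cf : ℕ := ((Finset.range r').filter (fun i => b - K ≤ i ∧ i < b - K + k)).card
        have hcfK : (cf : ℝ) * s ≤ (K : ℝ) * s := by
          apply mul_le_mul_of_nonneg_right _ hs.le
          exact_mod_cast (hcr.trans hk)
        have hcf0 : (0:ℝ) ≤ (cf : ℝ) * s := mul_nonneg (Nat.cast_nonneg _) hs.le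
        rw [abs_lt]
        constructor <;> linarith [hdr'.1, hdr'.2]
      · -- r' = n
        have hr'n : r' = n := by omega
        rw [hr'n]
        have hzsum : z = ∑ i ∈ Finset.range n, (if i < b then
            l i + t (if b - K ≤ i ∧ i < b - K + k then q else p) else c + t m) := by
          rw [hnb, Finset.sum_range_succ, if_neg (lt_irrefl b)]
          have hsum_b : (∑ i ∈ Finset.range b, (if i < b then
              l i + t (if b - K ≤ i ∧ i < b - K + k then q else p) else c + t m))
            = ∑ i ∈ Finset.range b, (l i + t (if b - K ≤ i ∧ i < b - K + k then q else p)) := by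
            apply Finset.sum_congr rfl
            intro i hi
            rw [Finset.mem_range] at hi
            rw [if_pos hi]
          rw [hsum_b, hsum_eq k b, hcard_eq k hk, hzeq, hl'eq]
          ring
        rw [Finset.sum_sub_distrib, ← hzsum, ← hTdef]
        rw [abs_lt]
        constructor <;> linarith [hzU.1, hzU.2]
  · -- Lset finite
    apply Set.Finite.subset (Set.Finite.image (fun kc : ℕ × ℝ => Sb + (kc.1 : ℝ) * s + kc.2)
      ((Set.finite_Iic K).prod hfinb))
    rintro y ⟨⟨k, hk, c, hc, he⟩, -⟩
    exact ⟨(k, c), ⟨hk, hc⟩, he.symm⟩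
  · -- Lset ⊆ USet (ε/2) T ∩ TGenStar υ t (m₁+1)
    rintro y ⟨⟨k, hk, c, hc, he⟩, hU⟩
    refine ⟨hU, ?_⟩
    obtain ⟨a, ha, hca⟩ := (hsubb hc).2
    have hterms : ∀ i < b, (l i + t (if b - K ≤ i ∧ i < b - K + k then q else p))
        ∈ TGen υ t (m₁ + 1) := by
      intro i hi
      obtain ⟨a', ha', hla⟩ := ((hLprop i (by omega)).2.1 (hlmem i hi)).2
      have hμ : (if b - K ≤ i ∧ i < b - K + k then q else p) ≤ m₁ + 1 := by
        split <;> omega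
      have hgen : υ + t (if b - K ≤ i ∧ i < b - K + k then q else p) ∈ TGen υ t (m₁ + 1) :=
        mem_semigroupGen_of_mem ⟨_, hμ, rfl⟩
      have heq2 : l i + t (if b - K ≤ i ∧ i < b - K + k then q else p)
          = (υ + t (if b - K ≤ i ∧ i < b - K + k then q else p)) + a' := by
        simp only at hla
        rw [← hla]; ring
      rw [heq2]
      exact add_mem_semigroupGen hgen ha'
    have hsum : (∑ i ∈ Finset.range b, (l i + t (if b - K ≤ i ∧ i < b - K + k then q else p)))
        ∈ TGen υ t (m₁ + 1) :=
      sum_mem_semigroupGen _ b (by omega) hterms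
    have hSks : Sb + (k : ℝ) * s
        = ∑ i ∈ Finset.range b, (l i + t (if b - K ≤ i ∧ i < b - K + k then q else p)) := by
      rw [hsum_eq k b, hcard_eq k hk]
    refine ⟨a + ∑ i ∈ Finset.range b, (l i + t (if b - K ≤ i ∧ i < b - K + k then q else p)),
      add_mem_semigroupGen ha hsum, ?_⟩
    simp only at hca
    simp only
    rw [he, ← hSks, ← hca]
    ring
  · -- Lset is δ-dense in USet (ε/2) T
    intro x hx
    have hxlt : x < x + δ := lt_add_of_pos_right x hδ
    have hxb : T - ε / 2 ≤ x ∧ x + δ ≤ T + ε / 2 := by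
      have := (Set.Ioo_subset_Ioo_iff hxlt).mp hx
      exact this
    have hTsplit : T = (∑ i ∈ Finset.range b, d i) + d b := by
      rw [hTdef, hnb, Finset.sum_range_succ]
    have hTb : (∑ i ∈ Finset.range b, d i)
        = Sb + ∑ i ∈ Finset.range b, (d i - l i - t p) := hdrel b
    set v : ℝ := x + δ / 2 with hvdef
    set w : ℝ := v - Sb with hwdef
    have hsubJ : Set.Ioo (w - K * s) (w - K * s + ε / 12) ⊆ USet ε (d b) := by
      apply Set.Ioo_subset_Ioo
      · simp only [hwdef, hvdef]
        linarith [hdrb.1, hdrb.2, hxb.1, hxb.2]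
      · simp only [hwdef, hvdef]
        linarith [hdrb.1, hdrb.2, hxb.1, hxb.2]
    obtain ⟨y, hy1, hy2⟩ := hdenseb (w - K * s) hsubJ
    rw [Set.mem_Ioo] at hy1
    set u : ℝ := w - y with hudef
    have hu1 : (K : ℝ) * s - ε / 12 < u := by simp only [hudef]; linarith [hy1.2]
    have hu2 : u < (K : ℝ) * s := by simp only [hudef]; linarith [hy1.1]
    have hu0 : 0 < u := by linarith
    obtain ⟨k, hks, hks2, hkK⟩ : ∃ k : ℕ, (k : ℝ) * s ≤ u ∧ u < ((k : ℝ) + 1) * s ∧ k ≤ K := by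
      refine ⟨⌊u / s⌋₊, ?_, ?_, ?_⟩
      · have h1 : ((⌊u / s⌋₊ : ℕ) : ℝ) ≤ u / s := Nat.floor_le (le_of_lt (div_pos hu0 hs))
        exact (le_div_iff₀ hs).mp h1
      · have h1 : u / s < ((⌊u / s⌋₊ : ℕ) : ℝ) + 1 := Nat.lt_floor_add_one (u / s)
        exact (div_lt_iff₀ hs).mp h1
      · have h1 : ((⌊u / s⌋₊ : ℕ) : ℝ) * s < (K : ℝ) * s := by
          have := (le_div_iff₀ hs).mp (Nat.floor_le (le_of_lt (div_pos hu0 hs)))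
          linarith
        have h2 : ((⌊u / s⌋₊ : ℕ) : ℝ) < (K : ℝ) := lt_of_mul_lt_mul_right h1 hs.le
        exact le_of_lt (by exact_mod_cast h2)
    refine ⟨Sb + (k : ℝ) * s + y, ?_, ⟨k, hkK, y, hy2, rfl⟩, ?_⟩
    · rw [Set.mem_Ioo]
      constructor
      · simp only [hudef, hwdef, hvdef] at hks2 ⊢
        linarith
      · simp only [hudef, hwdef, hvdef] at hks ⊢
        linarith
    · apply hx
      rw [Set.mem_Ioo]
      constructor
      · simp only [hudef, hwdef, hvdef] at hks2 ⊢
        linarith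
      · simp only [hudef, hwdef, hvdef] at hks ⊢
        linarith
end
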